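/- arXiv:1611.00981 — 2 statements merged into one kernel-verified Lean document; each statement's English description precedes it below -/
import Mathlib

section
/- Let k_1 ≥ k_2 ≥ k_m ≥ 3 be integers with at most one of k_1, k_2, k_m odd, and let n_1 ≥ k_1 and n_2 ≥ k_2. Then [n_1, k_1+k_m, k_m] + [n_2, k_2+k_m, k_m] < [n_1+n_2, k_1+k_2+k_m, k_m]. -/
open SimpleGraph Finset

/-- The quantity `[n,m,l]` from the paper: if `n ≤ m-1` it is `C(n,2)`; otherwise, writing
`n = (m-1) + t(l-1) + r` with `0 ≤ r < l-1`, it is `C(m-1,2) + t·C(l-1,2) + C(r,2)`. -/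
def brkt3 (n m l : ℕ) : ℕ :=
  if n ≤ m - 1 then Nat.choose n 2
  else Nat.choose (m - 1) 2 + ((n - (m - 1)) / (l - 1)) * Nat.choose (l - 1) 2
      + Nat.choose ((n - (m - 1)) % (l - 1)) 2

/-- The quantity `[n,m]` from the paper: `C(⌊m/2⌋-1,2) + ⌊(m-2)/2⌋·(n - ⌊m/2⌋ + 1)`. -/
def brkt2 (n m : ℕ) : ℕ :=
  Nat.choose (m / 2 - 1) 2 + ((m - 2) / 2) * (n - m / 2 + 1)

/-- The disjoint union of paths `P_{k 0} ∪ … ∪ P_{k (m-1)}`. -/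
def pathUnion (m : ℕ) (k : Fin m → ℕ) : SimpleGraph (Σ i : Fin m, Fin (k i)) where
  Adj x y := x.1 = y.1 ∧ ((x.2 : ℕ) + 1 = (y.2 : ℕ) ∨ (y.2 : ℕ) + 1 = (x.2 : ℕ))
  symm := by constructor; rintro x y ⟨h1, h2⟩; exact ⟨h1.symm, h2.symm⟩
  loopless := by constructor; rintro x ⟨-, h⟩; omega

/-- `G` contains a copy of `H` as a subgraph. -/
def ContainsSub {V W : Type*} (G : SimpleGraph V) (H : SimpleGraph W) : Prop :=
  ∃ f : W ↪ V, ∀ a b, H.Adj a b → G.Adj (f a) (f b)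

/-- The Turán number `ex(n,H)`: the maximum number of edges of a simple graph on `n`
vertices containing no subgraph isomorphic to `H`. -/
noncomputable def exNum (n : ℕ) {W : Type*} (H : SimpleGraph W) : ℕ :=
  sSup {e : ℕ | ∃ G : SimpleGraph (Fin n), ¬ ContainsSub G H ∧ G.edgeSet.ncard = e}

/-- The connected Turán number `ex_con(n,H)`: the maximum number of edges of a connected
simple graph on `n` vertices containing no subgraph isomorphic to `H`. -/
noncomputable def exConNum (n : ℕ) {W : Type*} (H : SimpleGraph W) : ℕ :=
  sSup {e : ℕ | ∃ G : SimpleGraph (Fin n),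
    G.Connected ∧ ¬ ContainsSub G H ∧ G.edgeSet.ncard = e}

/-- The graph `K_m ∪ M_{n-m}` on `Fin n`: a complete graph on the first `m` vertices
together with a maximum matching on the remaining `n - m` vertices. -/
def compPlusMatching (n m : ℕ) : SimpleGraph (Fin n) where
  Adj a b := a ≠ b ∧
    (((a : ℕ) < m ∧ (b : ℕ) < m) ∨
     (m ≤ (a : ℕ) ∧ m ≤ (b : ℕ) ∧ ((a : ℕ) - m) / 2 = ((b : ℕ) - m) / 2))
  symm := by constructor; rintro a b ⟨h1, h2⟩; exact ⟨h1.symm, by tauto⟩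
  loopless := by constructor; rintro a ⟨h, -⟩; exact h rfl

/-- The graph `K_l + (K_2 ∪ K̄_{n-l-2})` on `Fin n`. -/
def joinK2Empty (n l : ℕ) : SimpleGraph (Fin n) where
  Adj a b := a ≠ b ∧ ((a : ℕ) < l ∨ (b : ℕ) < l ∨ ((a : ℕ) < l + 2 ∧ (b : ℕ) < l + 2))
  symm := by constructor; rintro a b ⟨h1, h2⟩; exact ⟨h1.symm, by tauto⟩
  loopless := by constructor; rintro a ⟨h, -⟩; exact h rfl


lemma addc (a b : ℕ) : (a+b).choose 2 = a.choose 2 + b.choose 2 + a*b := by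
  induction b with
  | zero => simp
  | succ n ih =>
    have h1 : a + (n+1) = (a+n) + 1 := by ring
    have h2 : (a+n+1).choose 2 = (a+n).choose 2 + (a+n) := by
      rw [show (2:ℕ) = 1+1 from rfl, Nat.choose_succ_succ]
      simp [Nat.choose_one_right]; ring
    have h3 : (n+1).choose 2 = n.choose 2 + n := by
      rw [show (2:ℕ) = 1+1 from rfl, Nat.choose_succ_succ]
      simp [Nat.choose_one_right]; ring
    rw [h1, h2, h3, ih]; ring

def Fa (a s : ℕ) : ℕ := s / a * Nat.choose a 2 + Nat.choose (s % a) 2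

lemma F_le {a s : ℕ} (ha : 1 ≤ a) (hs : s ≤ a) : Fa a s = s.choose 2 := by
  rcases lt_or_eq_of_le hs with h | h
  · simp [Fa, Nat.div_eq_of_lt h, Nat.mod_eq_of_lt h]
  · subst h; simp [Fa, Nat.div_self (by omega : 0 < s), Nat.mod_self]

lemma F_shift {a : ℕ} (ha : 1 ≤ a) (s : ℕ) : Fa a (s+a) = Fa a s + a.choose 2 := by
  simp [Fa, Nat.add_div_right _ (by omega : 0 < a), Nat.add_mod_right, Nat.succ_mul]
  ring

lemma F_addmul {a : ℕ} (ha : 1 ≤ a) (s q : ℕ) :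
    Fa a (s + q*a) = Fa a s + q * a.choose 2 := by
  induction q with
  | zero => simp
  | succ n ih =>
    have : s + (n+1)*a = (s + n*a) + a := by ring
    rw [this, F_shift ha, ih]; ring

lemma spread {s n1 n2 : ℕ} (h1 : s ≤ n1) (h2 : s ≤ n2) :
    n1.choose 2 + n2.choose 2 + (n1-s)*(n2-s) = s.choose 2 + (n1+n2-s).choose 2 := by
  obtain ⟨x, rfl⟩ := Nat.exists_eq_add_of_le h1
  obtain ⟨y, rfl⟩ := Nat.exists_eq_add_of_le h2
  have e1 : s + x - s = x := by omega
  have e2 : s + y - s = y := by omega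
  have e3 : (s+x) + (s+y) - s = s + (x+y) := by omega
  rw [e1, e2, e3, addc s x, addc s y, addc s (x+y), addc x y]; ring

lemma Fres {a u v : ℕ} (hu : u < a) (hv : v < a) :
    u.choose 2 + v.choose 2 ≤ Fa a (u+v) := by
  by_cases h : u + v < a
  · rw [F_le (by omega) (le_of_lt h)]
    have := addc u v; omega
  · have hw : u + v = (u + v - a) + a := by omega
    rw [hw, F_shift (by omega)]
    have h1 : u + v - a ≤ u := by omega
    have h2 : u + v - a ≤ v := by omega
    have hsp := spread h1 h2
    have e : u + v - (u + v - a) = a := by omega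
    rw [e] at hsp
    rw [F_le (by omega) (by omega : u + v - a ≤ a)]
    omega

lemma F_super {a : ℕ} (ha : 1 ≤ a) (s t : ℕ) : Fa a s + Fa a t ≤ Fa a (s+t) := by
  have hs : s = s % a + (s / a) * a := by
    have := Nat.mod_add_div' s a; omega
  have ht : t = t % a + (t / a) * a := by
    have := Nat.mod_add_div' t a; omega
  have hst : s + t = (s % a + t % a) + (s / a + t / a) * a := by
    rw [add_mul]; omega
  rw [hst, F_addmul ha, add_mul]
  conv_lhs => rw [hs, ht, F_addmul ha, F_addmul ha]
  have h1 : Fa a (s % a) = (s % a).choose 2 := F_le ha (le_of_lt (Nat.mod_lt _ (by omega)))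
  have h2 : Fa a (t % a) = (t % a).choose 2 := F_le ha (le_of_lt (Nat.mod_lt _ (by omega)))
  have h3 := Fres (Nat.mod_lt s (show 0 < a by omega)) (Nat.mod_lt t (show 0 < a by omega))
  omega

lemma core2 {k1 k2 a s : ℕ} (hk1 : 1 ≤ k1) (hk2 : 1 ≤ k2) (hs : s ≤ a) :
    (k1+s).choose 2 + (k2+a).choose 2 < (k1+k2+a).choose 2 + s.choose 2 := by
  have e1 := addc k1 s
  have e2 := addc k1 (k2+a)
  have e3 : k1 + (k2+a) = k1+k2+a := by ring
  rw [e3] at e2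
  have hlt : k1 * s < k1 * (k2+a) := by
    exact Nat.mul_lt_mul_of_pos_left (by omega) (by omega)
  omega
lemma key {a k1 k2 n1 n2 : ℕ} (ha : 1 ≤ a) (hk1 : 1 ≤ k1) (hk2 : 1 ≤ k2)
    (hn1 : k1 ≤ n1) (hn2 : k2 ≤ n2) :
    (if n1 ≤ k1 + a then n1.choose 2 else (k1+a).choose 2 + Fa a (n1 - (k1+a)))
    + (if n2 ≤ k2 + a then n2.choose 2 else (k2+a).choose 2 + Fa a (n2 - (k2+a)))
    < (if n1+n2 ≤ k1+k2+a then (n1+n2).choose 2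
        else (k1+k2+a).choose 2 + Fa a (n1+n2 - (k1+k2+a))) := by
  split_ifs with h1 h2 h3 h4 h5 h6 h7
  · -- all choose branch
    have e := addc n1 n2
    have hp : 0 < n1 * n2 := Nat.mul_pos (by omega) (by omega)
    omega
  · -- n1 ≤ A, n2 ≤ B, sum big
    set s := n1 + n2 - (k1+k2+a) with hs
    have hsa : s ≤ a := by omega
    have hs1 : s ≤ n1 - k1 := by omega
    have hs2 : s ≤ n2 - k2 := by omega
    rw [F_le ha hsa]
    have hsp := spread (show s ≤ n1 by omega) (show s ≤ n2 by omega)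
    have e : n1 + n2 - s = k1 + k2 + a := by omega
    rw [e] at hsp
    have hp : 0 < (n1 - s) * (n2 - s) := Nat.mul_pos (by omega) (by omega)
    omega
  · -- n1 ≤ A, n2 > B, sum ≤ : impossible
    omega
  · -- n1 ≤ A, n2 > B
    obtain ⟨s, rfl⟩ := Nat.exists_eq_add_of_le hn1
    have hsa : s ≤ a := by omega
    have e1 : k1 + s + n2 - (k1 + k2 + a) = s + (n2 - (k2 + a)) := by omega
    rw [e1]
    have h5 := F_super ha s (n2 - (k2+a))
    have h6 : Fa a s = s.choose 2 := F_le ha hsa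
    have h7 := core2 hk1 hk2 hsa (k1 := k1) (k2 := k2) (a := a)
    omega
  · -- n1 > A, n2 ≤ B, sum ≤ : impossible
    omega
  · -- n1 > A, n2 ≤ B
    obtain ⟨s, rfl⟩ := Nat.exists_eq_add_of_le hn2
    have hsa : s ≤ a := by omega
    have e1 : n1 + (k2 + s) - (k1 + k2 + a) = s + (n1 - (k1 + a)) := by omega
    rw [e1]
    have h5 := F_super ha s (n1 - (k1+a))
    have h6 : Fa a s = s.choose 2 := F_le ha hsa
    have h7 := core2 hk2 hk1 hsa (k1 := k2) (k2 := k1) (a := a)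
    have e2 : k2 + k1 + a = k1 + k2 + a := by ring
    rw [e2] at h7
    omega
  · -- both big, sum ≤ : impossible
    omega
  · -- both big
    have e1 : n1 + n2 - (k1 + k2 + a) = ((n1 - (k1+a)) + (n2 - (k2+a))) + a := by omega
    rw [e1, F_shift ha]
    have h5 := F_super ha (n1 - (k1+a)) (n2 - (k2+a))
    have h7 := core2 hk1 hk2 (le_refl a) (k1 := k1) (k2 := k2)
    omega

theorem statement15 (k1 k2 km n1 n2 : ℕ) (h12 : k2 ≤ k1) (h2m : km ≤ k2) (h3 : 3 ≤ km)
    (hodd : (if Odd k1 then 1 else 0) + (if Odd k2 then 1 else 0) +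
        (if Odd km then 1 else 0) ≤ 1)
    (hn1 : k1 ≤ n1) (hn2 : k2 ≤ n2) :
    brkt3 n1 (k1 + km) km + brkt3 n2 (k2 + km) km <
      brkt3 (n1 + n2) (k1 + k2 + km) km := by

  obtain ⟨a, rfl⟩ : ∃ a, km = a + 1 := ⟨km - 1, by omega⟩
  have e1 : k1 + (a+1) - 1 = k1 + a := by omega
  have e2 : k2 + (a+1) - 1 = k2 + a := by omega
  have e3 : k1 + k2 + (a+1) - 1 = k1 + k2 + a := by omega
  have e4 : (a+1) - 1 = a := by omega
  have hFa : ∀ m x : ℕ, m.choose 2 + x / a * a.choose 2 + (x % a).choose 2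
      = m.choose 2 + Fa a x := by
    intro m x; simp [Fa]; ring
  simp only [brkt3, e1, e2, e3, e4, hFa]
  exact key (by omega) (by omega) (by omega) hn1 hn2
end

section
/- Let k_1 ≥ k_2 ≥ k_m ≥ 3 be integers with at most one of k_1, k_2, k_m odd, and let n_1 ≥ k_1 and n_2 ≥ k_2 + k_m. Then [n_1, k_1+k_m, k_m] + [n_2, k_2+k_m] < max{ [n_1+n_2, k_1+k_2+k_m, k_m], [n_1+n_2, k_1+k_2+k_m] }. -/
open SimpleGraph Finset

lemma two_mul_choose_two (n : ℕ) : 2 * Nat.choose n 2 = n * (n - 1) := by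
  rw [Nat.choose_two_right]
  have h : 2 ∣ n * (n - 1) := by
    rcases Nat.even_or_odd n with h | h
    · exact Dvd.dvd.mul_right h.two_dvd _
    · rw [Nat.odd_iff] at h
      exact Dvd.dvd.mul_left (by omega : 2 ∣ (n-1)) _
  omega

lemma choose_two_eq (n k : ℕ) (h : n - 1 = k) : 2 * Nat.choose n 2 = n * k := by
  rw [two_mul_choose_two, h]

lemma brkt3_upper (n m l : ℕ) (hl : 3 ≤ l) :
    2 * brkt3 n m l ≤ (m-1)*(m-2) + (n-(m-1))*(l-2) := by
  by_cases hn : n ≤ m - 1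
  · rw [brkt3, if_pos hn, two_mul_choose_two]
    have : n * (n-1) ≤ (m-1)*(m-2) := Nat.mul_le_mul (by omega) (by omega)
    omega
  · rw [brkt3, if_neg hn]
    have hdm := Nat.div_add_mod (n - (m-1)) (l-1)
    have hr : (n - (m-1)) % (l-1) < l - 1 := Nat.mod_lt _ (by omega)
    have e1 : 2 * Nat.choose (m-1) 2 = (m-1)*(m-2) := choose_two_eq _ _ (by omega)
    have e3 := two_mul_choose_two ((n - (m-1)) % (l-1))
    have e4 : 2 * ((n - (m-1)) / (l-1) * Nat.choose (l-1) 2)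
        = (n - (m-1)) / (l-1) * ((l-1)*(l-2)) := by
      rw [Nat.mul_left_comm, choose_two_eq (l-1) (l-2) (by omega)]
    have h1 : (n - (m-1)) % (l-1) * ((n - (m-1)) % (l-1) - 1)
        ≤ (n - (m-1)) % (l-1) * (l-2) := Nat.mul_le_mul_left _ (by omega)
    have h2 : (n - (m-1)) * (l - 2)
        = (n - (m-1)) / (l-1) * ((l-1)*(l-2)) + (n - (m-1)) % (l-1) * (l-2) := by
      conv_lhs => rw [← hdm]
      ring
    omega

lemma brkt3_lower (n m l : ℕ) (hl : 3 ≤ l) (hn : ¬ n ≤ m - 1) :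
    ∃ r : ℕ, r ≤ l - 2 ∧
      2 * brkt3 n m l + r * (l-1-r) = (m-1)*(m-2) + (n-(m-1))*(l-2) := by
  refine ⟨(n - (m-1)) % (l-1), by
    have := Nat.mod_lt (n - (m-1)) (show 0 < l-1 by omega); omega, ?_⟩
  rw [brkt3, if_neg hn]
  have hdm := Nat.div_add_mod (n - (m-1)) (l-1)
  have hr : (n - (m-1)) % (l-1) < l - 1 := Nat.mod_lt _ (by omega)
  have e1 : 2 * Nat.choose (m-1) 2 = (m-1)*(m-2) := choose_two_eq _ _ (by omega)
  have e3 := two_mul_choose_two ((n - (m-1)) % (l-1))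
  have e4 : 2 * ((n - (m-1)) / (l-1) * Nat.choose (l-1) 2)
      = (n - (m-1)) / (l-1) * ((l-1)*(l-2)) := by
    rw [Nat.mul_left_comm, choose_two_eq (l-1) (l-2) (by omega)]
  have h2 : (n - (m-1)) * (l - 2)
      = (n - (m-1)) / (l-1) * ((l-1)*(l-2)) + (n - (m-1)) % (l-1) * (l-2) := by
    conv_lhs => rw [← hdm]
    ring
  have h3 : (n - (m-1)) % (l-1) * ((n - (m-1)) % (l-1) - 1)
      + (n - (m-1)) % (l-1) * (l - 1 - (n - (m-1)) % (l-1))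
      = (n - (m-1)) % (l-1) * (l-2) := by
    rw [← Nat.mul_add]
    rcases Nat.eq_zero_or_pos ((n - (m-1)) % (l-1)) with h | h
    · rw [h]; simp
    · congr 1; omega
  omega

lemma brkt2_two_mul (n m s : ℕ) (h2 : 2 ≤ m) (hs : 2*s ≤ m ∧ m ≤ 2*s + 1) :
    2 * brkt2 n m = (s-1)*(s-2) + 2*((s-1)*(n - s + 1)) := by
  rw [brkt2]
  have h1 : m / 2 = s := by omega
  have h2' : (m-2)/2 = s - 1 := by omega
  have h3 : 2 * Nat.choose (s-1) 2 = (s-1)*(s-2) := choose_two_eq _ _ (by omega)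
  rw [h1, h2']
  omega

set_option maxHeartbeats 1000000 in
theorem statement19 (k1 k2 km n1 n2 : ℕ) (h12 : k2 ≤ k1) (h2m : km ≤ k2) (h3 : 3 ≤ km)
    (hodd : (if Odd k1 then 1 else 0) + (if Odd k2 then 1 else 0) +
        (if Odd km then 1 else 0) ≤ 1)
    (hn1 : k1 ≤ n1) (hn2 : k2 + km ≤ n2) :
    brkt3 n1 (k1 + km) km + brkt2 n2 (k2 + km) <
      max (brkt3 (n1 + n2) (k1 + k2 + km) km) (brkt2 (n1 + n2) (k1 + k2 + km)) := by
  have hpar : k1 % 2 + k2 % 2 + km % 2 ≤ 1 := by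
    simp only [Nat.odd_iff] at hodd
    split_ifs at hodd <;> omega
  obtain ⟨a, b, c, e1, e2, e3, hk1, hk2, hkm, he1, he2, he3, hesum⟩ :
      ∃ a b c e1 e2 e3, k1 = 2*a+e1 ∧ k2 = 2*b+e2 ∧ km = 2*c+e3 ∧
        e1 ≤ 1 ∧ e2 ≤ 1 ∧ e3 ≤ 1 ∧ e1+e2+e3 ≤ 1 :=
    ⟨k1/2, k2/2, km/2, k1%2, k2%2, km%2, by omega, by omega, by omega,
      by omega, by omega, by omega, hpar⟩
  subst hk1 hk2 hkm
  have e2a : 2 * brkt2 n2 (2*b+e2 + (2*c+e3))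
      = (b+c-1)*(b+c-2) + 2*((b+c-1)*(n2 - (b+c) + 1)) :=
    brkt2_two_mul _ _ _ (by omega) (by omega)
  have hup := brkt3_upper n1 (2*a+e1 + (2*c+e3)) (2*c+e3) h3
  have hE : (e1:ℤ)*e1 = e1 ∧ (e2:ℤ)*e2 = e2 ∧ (e3:ℤ)*e3 = e3 ∧ (e1:ℤ)*e2 = 0 ∧
      (e1:ℤ)*e3 = 0 ∧ (e2:ℤ)*e3 = 0 := by
    have h : (e1 = 0 ∧ e2 = 0 ∧ e3 = 0) ∨ (e1 = 1 ∧ e2 = 0 ∧ e3 = 0) ∨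
        (e1 = 0 ∧ e2 = 1 ∧ e3 = 0) ∨ (e1 = 0 ∧ e2 = 0 ∧ e3 = 1) := by omega
    rcases h with ⟨h1,h2,h3⟩|⟨h1,h2,h3⟩|⟨h1,h2,h3⟩|⟨h1,h2,h3⟩ <;>
      subst h1 <;> subst h2 <;> subst h3 <;> norm_num
  rcases le_or_gt n2 (2*(2*a+e1)+(2*c+e3)) with hT | hT
  · -- brkt3 branch
    refine lt_of_lt_of_le ?_ (le_max_left _ _)
    obtain ⟨r, hr, hEq⟩ :=
      brkt3_lower (n1+n2) (2*a+e1 + (2*b+e2) + (2*c+e3)) (2*c+e3) h3 (by omega)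
    rcases le_or_gt n1 (2*a+e1 + (2*c+e3) - 1) with hc | hc
    · have hz : n1 - (2*a+e1 + (2*c+e3) - 1) = 0 := by omega
      rw [hz] at hup
      have Hpoly : (2*a+e1 + (2*c+e3) - 1)*(2*a+e1 + (2*c+e3) - 2) + 0*(2*c+e3-2)
          + ((b+c-1)*(b+c-2) + 2*((b+c-1)*(n2 - (b+c) + 1)))
          + r * (2*c+e3-1-r)
          < (2*a+e1 + (2*b+e2) + (2*c+e3) - 1)*(2*a+e1 + (2*b+e2) + (2*c+e3) - 2)
            + (n1+n2 - (2*a+e1 + (2*b+e2) + (2*c+e3) - 1))*(2*c+e3-2) := by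
        zify [show (1:ℕ) ≤ 2*a+e1+(2*c+e3) by omega, show (2:ℕ) ≤ 2*a+e1+(2*c+e3) by omega,
          show (1:ℕ) ≤ b+c by omega, show (2:ℕ) ≤ b+c by omega, show b+c ≤ n2 by omega,
          show (1:ℕ) ≤ 2*a+e1+(2*b+e2)+(2*c+e3) by omega,
          show (2:ℕ) ≤ 2*a+e1+(2*b+e2)+(2*c+e3) by omega,
          show 2*a+e1+(2*b+e2)+(2*c+e3)-1 ≤ n1+n2 by omega,
          show (2:ℕ) ≤ 2*c+e3 by omega, show r ≤ 2*c+e3-1 by omega,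
          show (1:ℕ) ≤ 2*c+e3 by omega]
        linarith [hE.1, hE.2.1, hE.2.2.1, hE.2.2.2.1, hE.2.2.2.2.1, hE.2.2.2.2.2,
          mul_nonneg (by omega : (0:ℤ) ≤ (e1:ℤ)) (by omega : (0:ℤ) ≤ (1-(e1:ℤ)-e2-e3)),
          mul_nonneg (by omega : (0:ℤ) ≤ (e2:ℤ)) (by omega : (0:ℤ) ≤ (1-(e1:ℤ)-e2-e3)),
          mul_nonneg (by omega : (0:ℤ) ≤ (e3:ℤ)) (by omega : (0:ℤ) ≤ (1-(e1:ℤ)-e2-e3)),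
          mul_nonneg (by omega : (0:ℤ) ≤ (e1:ℤ)) (by omega : (0:ℤ) ≤ (e2:ℤ)),
          mul_nonneg (by omega : (0:ℤ) ≤ (e1:ℤ)) (by omega : (0:ℤ) ≤ (e3:ℤ)),
          mul_nonneg (by omega : (0:ℤ) ≤ (e2:ℤ)) (by omega : (0:ℤ) ≤ (e3:ℤ)),
          mul_nonneg (by omega : (0:ℤ) ≤ ((a:ℤ)-b)) (by omega : (0:ℤ) ≤ (e2:ℤ)),
          mul_nonneg (by omega : (0:ℤ) ≤ ((b:ℤ)-c)) (by omega : (0:ℤ) ≤ ((b:ℤ)-c)),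
          mul_nonneg (by omega : (0:ℤ) ≤ ((b:ℤ)-c)) (by omega : (0:ℤ) ≤ ((c:ℤ)-1)),
          mul_nonneg (by omega : (0:ℤ) ≤ ((b:ℤ)-c)) (by omega : (0:ℤ) ≤ (e2:ℤ)),
          mul_nonneg (by omega : (0:ℤ) ≤ ((b:ℤ)-c)) (by omega : (0:ℤ) ≤ (e3:ℤ)),
          mul_nonneg (by omega : (0:ℤ) ≤ ((b:ℤ)-c)) (by omega : (0:ℤ) ≤ (2*(2*(a:ℤ)+e1)+(2*c+e3)-n2)),
          mul_nonneg (by omega : (0:ℤ) ≤ ((c:ℤ)-1)) (by omega : (0:ℤ) ≤ (1-(e3:ℤ))),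
          mul_nonneg (by omega : (0:ℤ) ≤ ((c:ℤ)-1)) (by omega : (0:ℤ) ≤ (e2:ℤ)),
          mul_nonneg (by omega : (0:ℤ) ≤ ((c:ℤ)-1)) (by omega : (0:ℤ) ≤ ((n1:ℤ)-(2*a+e1))),
          mul_nonneg (by omega : (0:ℤ) ≤ ((c:ℤ)-1)) (by omega : (0:ℤ) ≤ (2*(2*(a:ℤ)+e1)+(2*c+e3)-n2)),
          mul_nonneg (by omega : (0:ℤ) ≤ ((c:ℤ)-1)) (by omega : (0:ℤ) ≤ (2*(c:ℤ)+e3-2-r)),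
          mul_nonneg (by omega : (0:ℤ) ≤ (e3:ℤ)) (by omega : (0:ℤ) ≤ ((n1:ℤ)-(2*a+e1))),
          mul_nonneg (by omega : (0:ℤ) ≤ (e3:ℤ)) (by omega : (0:ℤ) ≤ ((n2:ℤ)-(2*b+e2+(2*c+e3)))),
          mul_nonneg (by omega : (0:ℤ) ≤ (e3:ℤ)) (by omega : (0:ℤ) ≤ (2*(c:ℤ)+e3-2-r)),
          mul_nonneg (by omega : (0:ℤ) ≤ (r:ℤ)) (by omega : (0:ℤ) ≤ (r:ℤ)),
          (by omega : (0:ℤ) ≤ ((a:ℤ)-b)),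
          (by omega : (0:ℤ) ≤ ((b:ℤ)-c)),
          (by omega : (0:ℤ) ≤ ((c:ℤ)-1)),
          (by omega : (0:ℤ) ≤ ((n2:ℤ)-(2*b+e2+(2*c+e3)))),
          (by omega : (0:ℤ) ≤ (2*(2*(a:ℤ)+e1)+(2*c+e3)-n2)),
          (by omega : (0:ℤ) ≤ (2*(c:ℤ)+e3-2-r)),
          (by omega : (0:ℤ) ≤ ((n1:ℤ)-(2*a+e1))),
          (by omega : (0:ℤ) ≤ (2*(c:ℤ)+e3-1-(((n1:ℤ)-(2*a+e1)))))]
      omega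
    · have Hpoly : (2*a+e1 + (2*c+e3) - 1)*(2*a+e1 + (2*c+e3) - 2)
          + (n1 - (2*a+e1 + (2*c+e3) - 1))*(2*c+e3-2)
          + ((b+c-1)*(b+c-2) + 2*((b+c-1)*(n2 - (b+c) + 1)))
          + r * (2*c+e3-1-r)
          < (2*a+e1 + (2*b+e2) + (2*c+e3) - 1)*(2*a+e1 + (2*b+e2) + (2*c+e3) - 2)
            + (n1+n2 - (2*a+e1 + (2*b+e2) + (2*c+e3) - 1))*(2*c+e3-2) := by
        zify [show (1:ℕ) ≤ 2*a+e1+(2*c+e3) by omega, show (2:ℕ) ≤ 2*a+e1+(2*c+e3) by omega,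
          show 2*a+e1+(2*c+e3)-1 ≤ n1 by omega,
          show (1:ℕ) ≤ b+c by omega, show (2:ℕ) ≤ b+c by omega, show b+c ≤ n2 by omega,
          show (1:ℕ) ≤ 2*a+e1+(2*b+e2)+(2*c+e3) by omega,
          show (2:ℕ) ≤ 2*a+e1+(2*b+e2)+(2*c+e3) by omega,
          show 2*a+e1+(2*b+e2)+(2*c+e3)-1 ≤ n1+n2 by omega,
          show (2:ℕ) ≤ 2*c+e3 by omega, show r ≤ 2*c+e3-1 by omega,
          show (1:ℕ) ≤ 2*c+e3 by omega]
        linarith [hE.1, hE.2.1, hE.2.2.1, hE.2.2.2.1, hE.2.2.2.2.1, hE.2.2.2.2.2,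
          mul_nonneg (by omega : (0:ℤ) ≤ (e1:ℤ)) (by omega : (0:ℤ) ≤ (1-(e1:ℤ)-e2-e3)),
          mul_nonneg (by omega : (0:ℤ) ≤ (e2:ℤ)) (by omega : (0:ℤ) ≤ (1-(e1:ℤ)-e2-e3)),
          mul_nonneg (by omega : (0:ℤ) ≤ (e3:ℤ)) (by omega : (0:ℤ) ≤ (1-(e1:ℤ)-e2-e3)),
          mul_nonneg (by omega : (0:ℤ) ≤ (e1:ℤ)) (by omega : (0:ℤ) ≤ (e2:ℤ)),
          mul_nonneg (by omega : (0:ℤ) ≤ (e1:ℤ)) (by omega : (0:ℤ) ≤ (e3:ℤ)),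
          mul_nonneg (by omega : (0:ℤ) ≤ (e2:ℤ)) (by omega : (0:ℤ) ≤ (e3:ℤ)),
          mul_nonneg (by omega : (0:ℤ) ≤ ((a:ℤ)-b)) (by omega : (0:ℤ) ≤ (e2:ℤ)),
          mul_nonneg (by omega : (0:ℤ) ≤ ((b:ℤ)-c)) (by omega : (0:ℤ) ≤ ((b:ℤ)-c)),
          mul_nonneg (by omega : (0:ℤ) ≤ ((b:ℤ)-c)) (by omega : (0:ℤ) ≤ ((c:ℤ)-1)),
          mul_nonneg (by omega : (0:ℤ) ≤ ((b:ℤ)-c)) (by omega : (0:ℤ) ≤ (e2:ℤ)),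
          mul_nonneg (by omega : (0:ℤ) ≤ ((b:ℤ)-c)) (by omega : (0:ℤ) ≤ (e3:ℤ)),
          mul_nonneg (by omega : (0:ℤ) ≤ ((b:ℤ)-c)) (by omega : (0:ℤ) ≤ (2*(2*(a:ℤ)+e1)+(2*c+e3)-n2)),
          mul_nonneg (by omega : (0:ℤ) ≤ ((c:ℤ)-1)) (by omega : (0:ℤ) ≤ ((c:ℤ)-1)),
          mul_nonneg (by omega : (0:ℤ) ≤ ((c:ℤ)-1)) (by omega : (0:ℤ) ≤ (e2:ℤ)),
          mul_nonneg (by omega : (0:ℤ) ≤ ((c:ℤ)-1)) (by omega : (0:ℤ) ≤ (2*(2*(a:ℤ)+e1)+(2*c+e3)-n2)),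
          mul_nonneg (by omega : (0:ℤ) ≤ ((c:ℤ)-1)) (by omega : (0:ℤ) ≤ (2*(c:ℤ)+e3-2-r)),
          mul_nonneg (by omega : (0:ℤ) ≤ (e3:ℤ)) (by omega : (0:ℤ) ≤ ((n2:ℤ)-(2*b+e2+(2*c+e3)))),
          mul_nonneg (by omega : (0:ℤ) ≤ (e3:ℤ)) (by omega : (0:ℤ) ≤ (2*(c:ℤ)+e3-2-r)),
          mul_nonneg (by omega : (0:ℤ) ≤ (r:ℤ)) (by omega : (0:ℤ) ≤ (r:ℤ)),
          (by omega : (0:ℤ) ≤ ((a:ℤ)-b)),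
          (by omega : (0:ℤ) ≤ ((b:ℤ)-c)),
          (by omega : (0:ℤ) ≤ ((c:ℤ)-1)),
          (by omega : (0:ℤ) ≤ ((n2:ℤ)-(2*b+e2+(2*c+e3)))),
          (by omega : (0:ℤ) ≤ (2*(2*(a:ℤ)+e1)+(2*c+e3)-n2)),
          (by omega : (0:ℤ) ≤ (2*(c:ℤ)+e3-2-r))]
      omega
  · -- brkt2 branch
    refine lt_of_lt_of_le ?_ (le_max_right _ _)
    have e2b : 2 * brkt2 (n1+n2) (2*a+e1 + (2*b+e2) + (2*c+e3))
        = (a+b+c-1)*(a+b+c-2) + 2*((a+b+c-1)*(n1+n2 - (a+b+c) + 1)) :=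
      brkt2_two_mul _ _ _ (by omega) (by omega)
    rcases le_or_gt n1 (2*a+e1 + (2*c+e3) - 1) with hc | hc
    · have hz : n1 - (2*a+e1 + (2*c+e3) - 1) = 0 := by omega
      rw [hz] at hup
      have Hpoly : (2*a+e1 + (2*c+e3) - 1)*(2*a+e1 + (2*c+e3) - 2) + 0*(2*c+e3-2)
          + ((b+c-1)*(b+c-2) + 2*((b+c-1)*(n2 - (b+c) + 1)))
          < (a+b+c-1)*(a+b+c-2) + 2*((a+b+c-1)*(n1+n2 - (a+b+c) + 1)) := by
        zify [show (1:ℕ) ≤ 2*a+e1+(2*c+e3) by omega, show (2:ℕ) ≤ 2*a+e1+(2*c+e3) by omega,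
          show (1:ℕ) ≤ b+c by omega, show (2:ℕ) ≤ b+c by omega, show b+c ≤ n2 by omega,
          show (1:ℕ) ≤ a+b+c by omega, show (2:ℕ) ≤ a+b+c by omega,
          show a+b+c ≤ n1+n2 by omega, show (2:ℕ) ≤ 2*c+e3 by omega]
        linarith [hE.1, hE.2.1, hE.2.2.1, hE.2.2.2.1, hE.2.2.2.2.1, hE.2.2.2.2.2,
          mul_nonneg (by omega : (0:ℤ) ≤ (e1:ℤ)) (by omega : (0:ℤ) ≤ (1-(e1:ℤ)-e2-e3)),
          mul_nonneg (by omega : (0:ℤ) ≤ (e2:ℤ)) (by omega : (0:ℤ) ≤ (1-(e1:ℤ)-e2-e3)),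
          mul_nonneg (by omega : (0:ℤ) ≤ (e3:ℤ)) (by omega : (0:ℤ) ≤ (1-(e1:ℤ)-e2-e3)),
          mul_nonneg (by omega : (0:ℤ) ≤ (e1:ℤ)) (by omega : (0:ℤ) ≤ (e2:ℤ)),
          mul_nonneg (by omega : (0:ℤ) ≤ (e1:ℤ)) (by omega : (0:ℤ) ≤ (e3:ℤ)),
          mul_nonneg (by omega : (0:ℤ) ≤ (e2:ℤ)) (by omega : (0:ℤ) ≤ (e3:ℤ)),
          mul_nonneg (by omega : (0:ℤ) ≤ ((a:ℤ)-b)) (by omega : (0:ℤ) ≤ (1-(e3:ℤ))),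
          mul_nonneg (by omega : (0:ℤ) ≤ ((a:ℤ)-b)) (by omega : (0:ℤ) ≤ ((a:ℤ)-b)),
          mul_nonneg (by omega : (0:ℤ) ≤ ((a:ℤ)-b)) (by omega : (0:ℤ) ≤ ((b:ℤ)-c)),
          mul_nonneg (by omega : (0:ℤ) ≤ ((a:ℤ)-b)) (by omega : (0:ℤ) ≤ ((c:ℤ)-1)),
          mul_nonneg (by omega : (0:ℤ) ≤ ((a:ℤ)-b)) (by omega : (0:ℤ) ≤ (e1:ℤ)),
          mul_nonneg (by omega : (0:ℤ) ≤ ((a:ℤ)-b)) (by omega : (0:ℤ) ≤ ((n1:ℤ)-(2*a+e1))),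
          mul_nonneg (by omega : (0:ℤ) ≤ ((a:ℤ)-b)) (by omega : (0:ℤ) ≤ ((n2:ℤ)-(2*(2*a+e1)+(2*c+e3)+1))),
          mul_nonneg (by omega : (0:ℤ) ≤ ((b:ℤ)-c)) (by omega : (0:ℤ) ≤ (1-(e3:ℤ))),
          mul_nonneg (by omega : (0:ℤ) ≤ ((b:ℤ)-c)) (by omega : (0:ℤ) ≤ ((b:ℤ)-c)),
          mul_nonneg (by omega : (0:ℤ) ≤ ((b:ℤ)-c)) (by omega : (0:ℤ) ≤ ((c:ℤ)-1)),
          mul_nonneg (by omega : (0:ℤ) ≤ ((b:ℤ)-c)) (by omega : (0:ℤ) ≤ (e1:ℤ)),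
          mul_nonneg (by omega : (0:ℤ) ≤ ((b:ℤ)-c)) (by omega : (0:ℤ) ≤ ((n1:ℤ)-(2*a+e1))),
          mul_nonneg (by omega : (0:ℤ) ≤ ((b:ℤ)-c)) (by omega : (0:ℤ) ≤ ((n2:ℤ)-(2*(2*a+e1)+(2*c+e3)+1))),
          mul_nonneg (by omega : (0:ℤ) ≤ ((c:ℤ)-1)) (by omega : (0:ℤ) ≤ (1-(e3:ℤ))),
          mul_nonneg (by omega : (0:ℤ) ≤ ((c:ℤ)-1)) (by omega : (0:ℤ) ≤ ((c:ℤ)-1)),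
          mul_nonneg (by omega : (0:ℤ) ≤ ((c:ℤ)-1)) (by omega : (0:ℤ) ≤ (e1:ℤ)),
          mul_nonneg (by omega : (0:ℤ) ≤ ((c:ℤ)-1)) (by omega : (0:ℤ) ≤ ((n1:ℤ)-(2*a+e1))),
          mul_nonneg (by omega : (0:ℤ) ≤ ((c:ℤ)-1)) (by omega : (0:ℤ) ≤ ((n2:ℤ)-(2*(2*a+e1)+(2*c+e3)+1))),
          (by omega : (0:ℤ) ≤ ((a:ℤ)-b)),
          (by omega : (0:ℤ) ≤ ((b:ℤ)-c)),
          (by omega : (0:ℤ) ≤ ((c:ℤ)-1)),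
          (by omega : (0:ℤ) ≤ ((n1:ℤ)-(2*a+e1))),
          (by omega : (0:ℤ) ≤ ((n2:ℤ)-(2*(2*a+e1)+(2*c+e3)+1))),
          (by omega : (0:ℤ) ≤ (2*(c:ℤ)+e3-1-(((n1:ℤ)-(2*a+e1)))))]
      omega
    · have Hpoly : (2*a+e1 + (2*c+e3) - 1)*(2*a+e1 + (2*c+e3) - 2)
          + (n1 - (2*a+e1 + (2*c+e3) - 1))*(2*c+e3-2)
          + ((b+c-1)*(b+c-2) + 2*((b+c-1)*(n2 - (b+c) + 1)))
          < (a+b+c-1)*(a+b+c-2) + 2*((a+b+c-1)*(n1+n2 - (a+b+c) + 1)) := by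
        zify [show (1:ℕ) ≤ 2*a+e1+(2*c+e3) by omega, show (2:ℕ) ≤ 2*a+e1+(2*c+e3) by omega,
          show 2*a+e1+(2*c+e3)-1 ≤ n1 by omega,
          show (1:ℕ) ≤ b+c by omega, show (2:ℕ) ≤ b+c by omega, show b+c ≤ n2 by omega,
          show (1:ℕ) ≤ a+b+c by omega, show (2:ℕ) ≤ a+b+c by omega,
          show a+b+c ≤ n1+n2 by omega, show (2:ℕ) ≤ 2*c+e3 by omega]
        linarith [hE.1, hE.2.1, hE.2.2.1, hE.2.2.2.1, hE.2.2.2.2.1, hE.2.2.2.2.2,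
          mul_nonneg (by omega : (0:ℤ) ≤ (e1:ℤ)) (by omega : (0:ℤ) ≤ (1-(e1:ℤ)-e2-e3)),
          mul_nonneg (by omega : (0:ℤ) ≤ (e2:ℤ)) (by omega : (0:ℤ) ≤ (1-(e1:ℤ)-e2-e3)),
          mul_nonneg (by omega : (0:ℤ) ≤ (e3:ℤ)) (by omega : (0:ℤ) ≤ (1-(e1:ℤ)-e2-e3)),
          mul_nonneg (by omega : (0:ℤ) ≤ (e1:ℤ)) (by omega : (0:ℤ) ≤ (e2:ℤ)),
          mul_nonneg (by omega : (0:ℤ) ≤ (e1:ℤ)) (by omega : (0:ℤ) ≤ (e3:ℤ)),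
          mul_nonneg (by omega : (0:ℤ) ≤ (e2:ℤ)) (by omega : (0:ℤ) ≤ (e3:ℤ)),
          mul_nonneg (by omega : (0:ℤ) ≤ (1-(e3:ℤ))) (by omega : (0:ℤ) ≤ ((n1:ℤ)-(2*a+e1+(2*c+e3)-1))),
          mul_nonneg (by omega : (0:ℤ) ≤ ((a:ℤ)-b)) (by omega : (0:ℤ) ≤ ((a:ℤ)-b)),
          mul_nonneg (by omega : (0:ℤ) ≤ ((a:ℤ)-b)) (by omega : (0:ℤ) ≤ ((b:ℤ)-c)),
          mul_nonneg (by omega : (0:ℤ) ≤ ((a:ℤ)-b)) (by omega : (0:ℤ) ≤ ((c:ℤ)-1)),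
          mul_nonneg (by omega : (0:ℤ) ≤ ((a:ℤ)-b)) (by omega : (0:ℤ) ≤ (e1:ℤ)),
          mul_nonneg (by omega : (0:ℤ) ≤ ((a:ℤ)-b)) (by omega : (0:ℤ) ≤ ((n1:ℤ)-(2*a+e1+(2*c+e3)-1))),
          mul_nonneg (by omega : (0:ℤ) ≤ ((a:ℤ)-b)) (by omega : (0:ℤ) ≤ ((n2:ℤ)-(2*(2*a+e1)+(2*c+e3)+1))),
          mul_nonneg (by omega : (0:ℤ) ≤ ((b:ℤ)-c)) (by omega : (0:ℤ) ≤ ((b:ℤ)-c)),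
          mul_nonneg (by omega : (0:ℤ) ≤ ((b:ℤ)-c)) (by omega : (0:ℤ) ≤ ((c:ℤ)-1)),
          mul_nonneg (by omega : (0:ℤ) ≤ ((b:ℤ)-c)) (by omega : (0:ℤ) ≤ (e1:ℤ)),
          mul_nonneg (by omega : (0:ℤ) ≤ ((b:ℤ)-c)) (by omega : (0:ℤ) ≤ (e3:ℤ)),
          mul_nonneg (by omega : (0:ℤ) ≤ ((b:ℤ)-c)) (by omega : (0:ℤ) ≤ ((n1:ℤ)-(2*a+e1+(2*c+e3)-1))),
          mul_nonneg (by omega : (0:ℤ) ≤ ((b:ℤ)-c)) (by omega : (0:ℤ) ≤ ((n2:ℤ)-(2*(2*a+e1)+(2*c+e3)+1))),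
          mul_nonneg (by omega : (0:ℤ) ≤ ((c:ℤ)-1)) (by omega : (0:ℤ) ≤ ((c:ℤ)-1)),
          mul_nonneg (by omega : (0:ℤ) ≤ ((c:ℤ)-1)) (by omega : (0:ℤ) ≤ (e1:ℤ)),
          mul_nonneg (by omega : (0:ℤ) ≤ ((c:ℤ)-1)) (by omega : (0:ℤ) ≤ ((n1:ℤ)-(2*a+e1+(2*c+e3)-1))),
          mul_nonneg (by omega : (0:ℤ) ≤ ((c:ℤ)-1)) (by omega : (0:ℤ) ≤ ((n2:ℤ)-(2*(2*a+e1)+(2*c+e3)+1))),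
          (by omega : (0:ℤ) ≤ ((a:ℤ)-b)),
          (by omega : (0:ℤ) ≤ ((b:ℤ)-c)),
          (by omega : (0:ℤ) ≤ ((c:ℤ)-1)),
          (by omega : (0:ℤ) ≤ ((n1:ℤ)-(2*a+e1+(2*c+e3)-1))),
          (by omega : (0:ℤ) ≤ ((n2:ℤ)-(2*(2*a+e1)+(2*c+e3)+1)))]
      omega
end
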